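/- arXiv:2601.09244 — 2 statements merged into one kernel-verified Lean document; each statement's English description precedes it below -/
import Mathlib

section
/- Let s ≥ r ≥ 3, ℓ ≥ 2 and n ≥ ℓ be integers. Let H_1 be the r-graph whose vertex set is partitioned as A ∪ B with |A| = ℓ and |B| = n − ℓ, and whose hyperedges are exactly the r-subsets of A ∪ B containing at least two vertices of A. Then H_1 is S_ℓ^r-free, N(K_s^{(r)}, H_1) = Σ_{i=0}^{r−2} C(ℓ, s−r+2+i)·C(n−ℓ, r−2−i), and consequently ex_r(n, K_s^{(r)}, S_ℓ^r) ≥ Σ_{i=0}^{r−2} C(ℓ, s−r+2+i)·C(n−ℓ, r−2−i). -/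
open Finset

/-- A hypergraph (with vertices drawn from `ℕ`) given by its finite set of hyperedges. -/
abbrev HG : Type := Finset (Finset ℕ)

/-- The support (set of non-isolated vertices) of a hypergraph. -/
def hsupp (G : HG) : Finset ℕ := G.sup id

/-- `G` is `r`-uniform: every hyperedge has exactly `r` vertices. -/
def Uniform (r : ℕ) (G : HG) : Prop := ∀ e ∈ G, e.card = r

/-- The image of a hypergraph under a relabelling of the vertices. -/
def emap (f : ℕ → ℕ) (G : HG) : HG := G.image (Finset.image f)

/-- `K` is an isomorphic copy of `H` (as hypergraphs; isolated vertices are irrelevant). -/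
def IsCopy (H K : HG) : Prop :=
  ∃ f : ℕ → ℕ, Set.InjOn f ↑(hsupp H) ∧ emap f H = K

/-- `G` contains a subhypergraph isomorphic to `H`. -/
def Contains (G H : HG) : Prop := ∃ K, K ⊆ G ∧ IsCopy H K

/-- `N(H, G)`: the number of subhypergraphs of `G` isomorphic to `H`. -/
noncomputable def copyCount (H G : HG) : ℕ :=
  Set.ncard {K : HG | K ⊆ G ∧ IsCopy H K}

/-- The generalized Turán number `ex_r(n, H, F)`: the maximum number of copies of `H`
in an `F`-free `r`-uniform hypergraph on `n` vertices. -/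
noncomputable def exCount (r n : ℕ) (H F : HG) : ℕ :=
  sSup { m | ∃ G : HG, Uniform r G ∧ hsupp G ⊆ Finset.range n ∧
    ¬ Contains G F ∧ m = copyCount H G }

/-- The Turán number `ex_r(n, F)`: the maximum number of hyperedges in an `F`-free
`r`-uniform hypergraph on `n` vertices. -/
noncomputable def exTuran (r n : ℕ) (F : HG) : ℕ :=
  sSup { m | ∃ G : HG, Uniform r G ∧ hsupp G ⊆ Finset.range n ∧
    ¬ Contains G F ∧ m = G.card }

/-- The complete `r`-graph `K_s^{(r)}` on `s` vertices. -/
def completeHG (r s : ℕ) : HG := Finset.powersetCard r (Finset.range s)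

/-- The path `P_l` with `l` edges, as a 2-uniform hypergraph. -/
def pathG (l : ℕ) : HG := (Finset.range l).image (fun i => ({i, i+1} : Finset ℕ))

/-- The cycle `C_l` with `l` edges, as a 2-uniform hypergraph. -/
def cycleG (l : ℕ) : HG := (Finset.range l).image (fun i => ({i, (i+1) % l} : Finset ℕ))

/-- The star `S_l = K_{1,l}` with `l` edges, as a 2-uniform hypergraph. -/
def starG (l : ℕ) : HG := (Finset.range l).image (fun i => ({0, i+1} : Finset ℕ))

/-- The `r`-expansion `F^r` of a graph `F`: insert `r - 2` new distinct vertices into each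
edge of `F`, the new vertices being distinct across edges and disjoint from `V(F)`. -/
def expansion (r : ℕ) (F : HG) : HG :=
  F.image (fun e => e.image (fun v => Nat.pair 0 v) ∪
    (Finset.range (r-2)).image (fun j => Nat.pair 1 (Nat.pair (Encodable.encode e) j)))

/-- The vertex-disjoint union of the hypergraphs `H 0, …, H (k-1)`. -/
def hIUnion (k : ℕ) (H : ℕ → HG) : HG :=
  (Finset.range k).biUnion (fun i => emap (fun v => Nat.pair i v) (H i))

/-- The vertex-disjoint union of two hypergraphs. -/
def hUnion (G H : HG) : HG := emap (fun v => 2*v) G ∪ emap (fun v => 2*v+1) H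

/-- The strong chromatic number of a hypergraph (for a 2-uniform hypergraph this is
the usual chromatic number of the graph). -/
noncomputable def chromNum (G : HG) : ℕ :=
  sInf { k | ∃ c : ℕ → Fin k, ∀ e ∈ G, Set.InjOn c ↑e }

/-- The complete balanced `l`-partite `r`-graph `T_r(n, l)` on `n` vertices. -/
def turanHG (r n l : ℕ) : HG :=
  (Finset.powersetCard r (Finset.range n)).filter
    (fun e => ∀ i ∈ e, ∀ j ∈ e, i % l = j % l → i = j)

/-- `S_{n,t}^r(n-t, l)`: take a set `U` of `t` vertices together with a disjoint copy of
`T_r(n-t, l)`, and add as hyperedges all `r`-sets meeting `U`. -/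
def splitTuranHG (r n t l : ℕ) : HG :=
  (Finset.powersetCard r (Finset.range n)).filter
    (fun e => (∃ v ∈ e, v < t) ∨ ∀ i ∈ e, ∀ j ∈ e, (i - t) % l = (j - t) % l → i = j)

/-- `S_{n,t}^r`: the `n`-vertex `r`-graph of all `r`-sets meeting a fixed set of `t` vertices. -/
def starHG (r n t : ℕ) : HG :=
  (Finset.powersetCard r (Finset.range n)).filter (fun e => ∃ v ∈ e, v < t)

/-- `F` is a member of the family `𝒦_t^r`. -/
def memFamilyK (r t : ℕ) (F : HG) : Prop :=
  Uniform r F ∧ F.card ≤ Nat.choose t 2 ∧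
    ∃ S : Finset ℕ, S.card = t ∧ ∀ u ∈ S, ∀ v ∈ S, u ≠ v → ∃ e ∈ F, u ∈ e ∧ v ∈ e

/-- The maximum number of copies of `H` in an `n`-vertex `r`-graph containing no member
of the family described by the predicate `P` as a subhypergraph. -/
noncomputable def exCountFam (r n : ℕ) (H : HG) (P : HG → Prop) : ℕ :=
  sSup { m | ∃ G : HG, Uniform r G ∧ hsupp G ⊆ Finset.range n ∧
    (∀ F : HG, P F → ¬ Contains G F) ∧ m = copyCount H G }

/-- `G` contains a Berge copy of `F`. -/
def ContainsBerge (G F : HG) : Prop :=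
  ∃ f : ℕ → ℕ, Set.InjOn f ↑(hsupp F) ∧
    ∃ φ : {e : Finset ℕ // e ∈ F} → {e : Finset ℕ // e ∈ G},
      Function.Injective φ ∧ ∀ e : {e : Finset ℕ // e ∈ F}, e.1.image f ⊆ (φ e).1

/-- `ex_s(n, Berge-F)`: the maximum number of hyperedges in an `n`-vertex `s`-graph
containing no Berge copy of `F`. -/
noncomputable def exBerge (s n : ℕ) (F : HG) : ℕ :=
  sSup { m | ∃ G : HG, Uniform s G ∧ hsupp G ⊆ Finset.range n ∧
    ¬ ContainsBerge G F ∧ m = G.card }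


/-! ### Auxiliary lemmas for Statement 18 -/

lemma emap_powersetCard' (f : ℕ → ℕ) (S : Finset ℕ) (r : ℕ) (hf : Set.InjOn f ↑S) :
    emap f (Finset.powersetCard r S) = Finset.powersetCard r (S.image f) := by
  ext t
  simp only [emap, Finset.mem_image, Finset.mem_powersetCard]
  constructor
  · rintro ⟨e, ⟨heS, hec⟩, rfl⟩
    refine ⟨Finset.image_subset_image heS, ?_⟩
    rw [Finset.card_image_of_injOn (hf.mono (by exact_mod_cast heS))]
    exact hec
  · rintro ⟨hts, htc⟩
    obtain ⟨e, heS, rfl⟩ := Finset.subset_image_iff.mp hts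
    refine ⟨e, ⟨heS, ?_⟩, rfl⟩
    rwa [Finset.card_image_of_injOn (hf.mono (by exact_mod_cast heS))] at htc

lemma hsupp_powersetCard' (r : ℕ) (S : Finset ℕ) (hr : 1 ≤ r) (hrs : r ≤ S.card) :
    hsupp (Finset.powersetCard r S) = S := by
  apply le_antisymm
  · exact Finset.sup_le fun e he => (Finset.mem_powersetCard.mp he).1
  · intro x hx
    obtain ⟨u, hu1, hu2, hu3⟩ := Finset.exists_subsuperset_card_eq
      (Finset.singleton_subset_iff.mpr hx) (by simpa using hr) hrs
    exact Finset.mem_sup.mpr ⟨u, Finset.mem_powersetCard.mpr ⟨hu2, hu3⟩,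
      hu1 (Finset.mem_singleton_self x)⟩

lemma count_fixed' (s n j : ℕ) (A B : Finset ℕ) (hAB : Disjoint A B)
    (hU : A ∪ B = Finset.range n) (hjs : j ≤ s) :
    ((Finset.powersetCard s (Finset.range n)).filter (fun S => (S ∩ B).card = j)).card
      = A.card.choose (s - j) * B.card.choose j := by
  have key : ((Finset.powersetCard s (Finset.range n)).filter
      (fun S => (S ∩ B).card = j)).card
      = (Finset.powersetCard (s - j) A ×ˢ Finset.powersetCard j B).card := by
    apply Finset.card_bij' (fun S _ => (S ∩ A, S ∩ B)) (fun P _ => P.1 ∪ P.2)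
    · intro S hS
      rw [Finset.mem_filter, Finset.mem_powersetCard] at hS
      obtain ⟨⟨hSn, hSc⟩, hSB⟩ := hS
      rw [Finset.mem_product, Finset.mem_powersetCard, Finset.mem_powersetCard]
      have hsplit : (S ∩ A) ∪ (S ∩ B) = S := by
        rw [← Finset.inter_union_distrib_left, hU]
        exact Finset.inter_eq_left.mpr hSn
      have hdisj : Disjoint (S ∩ A) (S ∩ B) :=
        hAB.mono Finset.inter_subset_right Finset.inter_subset_right
      have hcard : (S ∩ A).card + (S ∩ B).card = s := by
        rw [← Finset.card_union_of_disjoint hdisj, hsplit, hSc]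
      refine ⟨⟨Finset.inter_subset_right, ?_⟩, ⟨Finset.inter_subset_right, hSB⟩⟩
      dsimp only
      omega
    · intro P hP
      rw [Finset.mem_product, Finset.mem_powersetCard, Finset.mem_powersetCard] at hP
      obtain ⟨⟨h1A, h1c⟩, ⟨h2B, h2c⟩⟩ := hP
      rw [Finset.mem_filter, Finset.mem_powersetCard]
      have hdisj : Disjoint P.1 P.2 := hAB.mono h1A h2B
      have h1B : P.1 ∩ B = ∅ :=
        Finset.disjoint_iff_inter_eq_empty.mp (hAB.mono_left h1A)
      refine ⟨⟨?_, ?_⟩, ?_⟩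
      · rw [← hU]; exact Finset.union_subset_union h1A h2B
      · rw [Finset.card_union_of_disjoint hdisj, h1c, h2c]; omega
      · rw [Finset.union_inter_distrib_right, h1B,
          Finset.inter_eq_left.mpr h2B, Finset.empty_union, h2c]
    · intro S hS
      rw [Finset.mem_filter, Finset.mem_powersetCard] at hS
      rw [← Finset.inter_union_distrib_left, hU]
      exact Finset.inter_eq_left.mpr hS.1.1
    · intro P hP
      rw [Finset.mem_product, Finset.mem_powersetCard, Finset.mem_powersetCard] at hP
      obtain ⟨⟨h1A, h1c⟩, ⟨h2B, h2c⟩⟩ := hP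
      have h1B : P.1 ∩ B = ∅ :=
        Finset.disjoint_iff_inter_eq_empty.mp (hAB.mono_left h1A)
      have h2A : P.2 ∩ A = ∅ :=
        Finset.disjoint_iff_inter_eq_empty.mp (hAB.symm.mono_left h2B)
      have e1 : (P.1 ∪ P.2) ∩ A = P.1 := by
        rw [Finset.union_inter_distrib_right, h2A, Finset.inter_eq_left.mpr h1A,
          Finset.union_empty]
      have e2 : (P.1 ∪ P.2) ∩ B = P.2 := by
        rw [Finset.union_inter_distrib_right, h1B, Finset.inter_eq_left.mpr h2B,
          Finset.empty_union]
      simp [e1, e2]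
  rw [key, Finset.card_product, Finset.card_powersetCard, Finset.card_powersetCard]

/-- The expansion edge of the star edge `{0, i+1}`. -/
def starExpEdge (r i : ℕ) : Finset ℕ :=
  ({0, i+1} : Finset ℕ).image (fun v => Nat.pair 0 v) ∪
    (Finset.range (r-2)).image
      (fun j => Nat.pair 1 (Nat.pair (Encodable.encode ({0, i+1} : Finset ℕ)) j))

lemma starExpEdge_mem (r l i : ℕ) (hi : i < l) :
    starExpEdge r i ∈ expansion r (starG l) := by
  unfold expansion starExpEdge
  rw [Finset.mem_image]
  refine ⟨{0, i+1}, ?_, rfl⟩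
  unfold starG
  exact Finset.mem_image.mpr ⟨i, Finset.mem_range.mpr hi, rfl⟩

lemma pair00_mem_starExpEdge (r i : ℕ) : Nat.pair 0 0 ∈ starExpEdge r i := by
  unfold starExpEdge
  rw [Finset.mem_union]
  exact Or.inl (Finset.mem_image.mpr ⟨0, by simp, rfl⟩)

lemma starExpEdge_inter (r i j : ℕ) (hij : i ≠ j) :
    starExpEdge r i ∩ starExpEdge r j ⊆ {Nat.pair 0 0} := by
  intro u hu
  rw [Finset.mem_inter] at hu
  obtain ⟨hui, huj⟩ := hu
  unfold starExpEdge at hui huj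
  rw [Finset.mem_singleton]
  simp only [Finset.mem_union, Finset.mem_image, Finset.mem_insert, Finset.mem_singleton,
    Finset.mem_range] at hui huj
  rcases hui with ⟨a, ha, rfl⟩ | ⟨a, ha, rfl⟩
  · rcases huj with ⟨b, hb, hba⟩ | ⟨b, hb, hba⟩
    · obtain ⟨-, rfl⟩ := Nat.pair_eq_pair.mp hba
      rcases ha with rfl | rfl
      · rfl
      · rcases hb with hb0 | hbe
        · omega
        · omega
    · exact absurd (Nat.pair_eq_pair.mp hba).1 one_ne_zero
  · rcases huj with ⟨b, hb, hba⟩ | ⟨b, hb, hba⟩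
    · exact absurd (Nat.pair_eq_pair.mp hba).1 zero_ne_one
    · obtain ⟨-, h2⟩ := Nat.pair_eq_pair.mp hba
      obtain ⟨h3, -⟩ := Nat.pair_eq_pair.mp h2
      have hsets : ({0, j+1} : Finset ℕ) = {0, i+1} := Encodable.encode_injective h3
      have : (j+1 : ℕ) ∈ ({0, i+1} : Finset ℕ) := by
        rw [← hsets]; simp
      simp only [Finset.mem_insert, Finset.mem_singleton] at this
      omega

/-- `H₁` (given via the condition on its edges) contains no copy of `S_l^r`. -/
lemma H1_SlrFree (r l : ℕ) (hl : 2 ≤ l) (A : Finset ℕ) (hA : A.card = l)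
    (H1 : HG) (hmem : ∀ e ∈ H1, 2 ≤ (e ∩ A).card) :
    ¬ Contains H1 (expansion r (starG l)) := by
  rintro ⟨K, hK, f, hfi, hfe⟩
  set c := f (Nat.pair 0 0) with hc
  have hmemsup : ∀ i, i < l → ∀ u ∈ starExpEdge r i,
      u ∈ ↑(hsupp (expansion r (starG l))) := by
    intro i hi u hu
    exact Finset.mem_coe.mpr
      (Finset.mem_sup.mpr ⟨starExpEdge r i, starExpEdge_mem r l i hi, hu⟩)
  have hEmem : ∀ i, i < l → (starExpEdge r i).image f ∈ H1 := by
    intro i hi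
    apply hK
    rw [← hfe]
    exact Finset.mem_image_of_mem _ (starExpEdge_mem r l i hi)
  have hIcard : ∀ i, i < l → 2 ≤ ((starExpEdge r i).image f ∩ A).card :=
    fun i hi => hmem _ (hEmem i hi)
  have hIinter : ∀ i j, i < l → j < l → i ≠ j →
      (starExpEdge r i).image f ∩ (starExpEdge r j).image f ⊆ {c} := by
    intro i j hi hj hij x hx
    rw [Finset.mem_inter] at hx
    obtain ⟨u, hu, rfl⟩ := Finset.mem_image.mp hx.1
    obtain ⟨v, hv, hvx⟩ := Finset.mem_image.mp hx.2
    have huv : v = u := hfi (hmemsup j hj v hv) (hmemsup i hi u hu) hvx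
    subst huv
    have := starExpEdge_inter r i j hij (Finset.mem_inter.mpr ⟨hu, hv⟩)
    rw [Finset.mem_singleton] at this
    rw [Finset.mem_singleton, this, hc]
  set D : ℕ → Finset ℕ := fun i => ((starExpEdge r i).image f ∩ A).erase c with hD
  have hDdisj : ∀ i ∈ Finset.range l, ∀ j ∈ Finset.range l, i ≠ j →
      Disjoint (D i) (D j) := by
    intro i hi j hj hij
    rw [Finset.disjoint_left]
    intro x hxi hxj
    apply Finset.ne_of_mem_erase hxi
    have hx : x ∈ (starExpEdge r i).image f ∩ (starExpEdge r j).image f :=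
      Finset.mem_inter.mpr
        ⟨(Finset.mem_inter.mp (Finset.mem_of_mem_erase hxi)).1,
         (Finset.mem_inter.mp (Finset.mem_of_mem_erase hxj)).1⟩
    exact Finset.mem_singleton.mp
      (hIinter i j (Finset.mem_range.mp hi) (Finset.mem_range.mp hj) hij hx)
  have hcardD := Finset.card_biUnion hDdisj
  have hsub : (Finset.range l).biUnion D ⊆ A :=
    Finset.biUnion_subset.mpr fun i _ =>
      (Finset.erase_subset _ _).trans Finset.inter_subset_right
  have hle : ((Finset.range l).biUnion D).card ≤ l := by
    have := Finset.card_le_card hsub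
    rwa [hA] at this
  by_cases hcA : c ∈ A
  · have h1 : ∀ i ∈ Finset.range l, 1 ≤ (D i).card := by
      intro i hi
      have h2 := hIcard i (Finset.mem_range.mp hi)
      have h3 : ((starExpEdge r i).image f ∩ A).card - 1 ≤ (D i).card :=
        Finset.pred_card_le_card_erase
      omega
    have hge : l ≤ ((Finset.range l).biUnion D).card := by
      rw [hcardD]
      calc l = ∑ _i ∈ Finset.range l, 1 := by simp
        _ ≤ ∑ i ∈ Finset.range l, (D i).card := Finset.sum_le_sum h1
    have hsub' : (Finset.range l).biUnion D ⊆ A.erase c :=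
      Finset.biUnion_subset.mpr fun i _ =>
        Finset.erase_subset_erase c Finset.inter_subset_right
    have hlt : ((Finset.range l).biUnion D).card ≤ l - 1 := by
      have := Finset.card_le_card hsub'
      rwa [Finset.card_erase_of_mem hcA, hA] at this
    omega
  · have h2 : ∀ i ∈ Finset.range l, 2 ≤ (D i).card := by
      intro i hi
      have hcni : c ∉ (starExpEdge r i).image f ∩ A :=
        fun hcmem => hcA (Finset.inter_subset_right hcmem)
      rw [hD]
      dsimp only
      rw [Finset.erase_eq_of_notMem hcni]
      exact hIcard i (Finset.mem_range.mp hi)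
    have hge : 2 * l ≤ ((Finset.range l).biUnion D).card := by
      rw [hcardD]
      calc 2 * l = ∑ _i ∈ Finset.range l, 2 := by simp [Nat.mul_comm]
        _ ≤ ∑ i ∈ Finset.range l, (D i).card := Finset.sum_le_sum h2
    omega

lemma copies_complete (r s n : ℕ) (hr : 3 ≤ r) (hrs : r ≤ s) (A B : Finset ℕ)
    (hAB : Disjoint A B) (hU : A ∪ B = Finset.range n) (H1 : HG)
    (hH1 : H1 = (Finset.powersetCard r (Finset.range n)).filter
      (fun e => 2 ≤ (e ∩ A).card)) :
    {K : HG | K ⊆ H1 ∧ IsCopy (completeHG r s) K} =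
      ↑(((Finset.powersetCard s (Finset.range n)).filter
          (fun S => (S ∩ B).card ≤ r - 2)).image (fun S => Finset.powersetCard r S)) := by
  have hC : completeHG r s = Finset.powersetCard r (Finset.range s) := rfl
  have hsuppC : hsupp (completeHG r s) = Finset.range s := by
    rw [hC]
    exact hsupp_powersetCard' r _ (by omega) (by rw [Finset.card_range]; exact hrs)
  ext K
  simp only [Set.mem_setOf_eq, Finset.coe_image, Set.mem_image, Finset.mem_coe,
    Finset.mem_filter, Finset.mem_powersetCard]
  constructor
  · rintro ⟨hK, f, hfi, hfe⟩
    rw [hsuppC] at hfi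
    set S : Finset ℕ := (Finset.range s).image f with hS
    have hKS : K = Finset.powersetCard r S := by
      rw [← hfe, hC, emap_powersetCard' f _ r hfi]
    have hScard : S.card = s := by
      rw [hS, Finset.card_image_of_injOn hfi, Finset.card_range]
    have hsuppK : hsupp (Finset.powersetCard r S) = S :=
      hsupp_powersetCard' r S (by omega) (by omega)
    have hSn : S ⊆ Finset.range n := by
      intro x hx
      rw [← hsuppK] at hx
      unfold hsupp at hx
      rw [Finset.mem_sup] at hx
      obtain ⟨e, he, hxe⟩ := hx
      have heH1 : e ∈ H1 := hK (hKS ▸ he)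
      rw [hH1, Finset.mem_filter, Finset.mem_powersetCard] at heH1
      exact heH1.1.1 hxe
    refine ⟨S, ⟨⟨hSn, hScard⟩, ?_⟩, hKS.symm⟩
    by_contra hcon
    push_neg at hcon
    have hge : r - 1 ≤ (S ∩ B).card := by omega
    obtain ⟨Q, hQ, hQc⟩ := Finset.exists_subset_card_eq hge
    obtain ⟨t, hQt, htS, htc⟩ := Finset.exists_subsuperset_card_eq (n := r)
      (hQ.trans Finset.inter_subset_left) (by omega) (by omega)
    have htK : t ∈ H1 := hK (hKS ▸ Finset.mem_powersetCard.mpr ⟨htS, htc⟩)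
    rw [hH1, Finset.mem_filter] at htK
    have htA := htK.2
    have hdisj : Disjoint (t ∩ A) (t ∩ B) :=
      hAB.mono Finset.inter_subset_right Finset.inter_subset_right
    have hsum : (t ∩ A).card + (t ∩ B).card ≤ r := by
      rw [← Finset.card_union_of_disjoint hdisj, ← htc]
      exact Finset.card_le_card (Finset.union_subset Finset.inter_subset_left
        Finset.inter_subset_left)
    have hQtB : Q ⊆ t ∩ B :=
      Finset.subset_inter hQt (hQ.trans Finset.inter_subset_right)
    have := Finset.card_le_card hQtB
    omega
  · rintro ⟨S, ⟨⟨hSn, hSc⟩, hSB⟩, rfl⟩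
    constructor
    · intro t ht
      rw [Finset.mem_powersetCard] at ht
      obtain ⟨htS, htc⟩ := ht
      rw [hH1, Finset.mem_filter, Finset.mem_powersetCard]
      refine ⟨⟨htS.trans hSn, htc⟩, ?_⟩
      have hsplit : (t ∩ A) ∪ (t ∩ B) = t := by
        rw [← Finset.inter_union_distrib_left, hU]
        exact Finset.inter_eq_left.mpr (htS.trans hSn)
      have hdisj : Disjoint (t ∩ A) (t ∩ B) :=
        hAB.mono Finset.inter_subset_right Finset.inter_subset_right
      have hcard : (t ∩ A).card + (t ∩ B).card = r := by
        rw [← Finset.card_union_of_disjoint hdisj, hsplit, htc]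
      have htB : (t ∩ B).card ≤ (S ∩ B).card :=
        Finset.card_le_card (Finset.inter_subset_inter htS (Finset.Subset.refl B))
      omega
    · have hcards : (Finset.range s).card = S.card := by rw [Finset.card_range, hSc]
      have e := Finset.equivOfCardEq hcards
      have hinj : Set.InjOn
          (fun v => if h : v ∈ Finset.range s then ((e ⟨v, h⟩ : {x // x ∈ S}) : ℕ) else 0)
          ↑(Finset.range s) := by
        intro u hu v hv huv
        rw [Finset.mem_coe] at hu hv
        dsimp only at huv
        rw [dif_pos hu, dif_pos hv] at huv
        have := e.injective (Subtype.coe_injective huv)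
        simpa using this
      have himg : (Finset.range s).image
          (fun v => if h : v ∈ Finset.range s then ((e ⟨v, h⟩ : {x // x ∈ S}) : ℕ) else 0)
          = S := by
        apply Finset.Subset.antisymm
        · intro y hy
          rw [Finset.mem_image] at hy
          obtain ⟨v, hv, rfl⟩ := hy
          rw [dif_pos hv]
          exact (e ⟨v, hv⟩).2
        · intro y hy
          rw [Finset.mem_image]
          refine ⟨(e.symm ⟨y, hy⟩ : ℕ), (e.symm ⟨y, hy⟩).2, ?_⟩
          rw [dif_pos (e.symm ⟨y, hy⟩).2]
          simp
      exact ⟨_, by rw [hsuppC]; exact hinj,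
        by rw [hC, emap_powersetCard' _ _ _ hinj, himg]⟩

/-- The lower-bound construction for `ex_r(n, K_s^{(r)}, S_l^r)`:
the `r`-graph `H₁` on `A ∪ B` (`|A| = l`, `|B| = n - l`) whose hyperedges are the
`r`-sets with at least two vertices in `A` is `S_l^r`-free, its number of copies of
`K_s^{(r)}` equals `Σ_{i=0}^{r-2} C(l, s-r+2+i)·C(n-l, r-2-i)`, and consequently
`ex_r(n, K_s^{(r)}, S_l^r)` is at least this quantity. -/
theorem stmt18 (r s l n : ℕ) (hr : 3 ≤ r) (hrs : r ≤ s) (hl : 2 ≤ l) (hn : l ≤ n)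
    (A B : Finset ℕ) (hAB : Disjoint A B) (hU : A ∪ B = Finset.range n)
    (hA : A.card = l) (hB : B.card = n - l)
    (H1 : HG)
    (hH1 : H1 = (Finset.powersetCard r (Finset.range n)).filter
      (fun e => 2 ≤ (e ∩ A).card)) :
    ¬ Contains H1 (expansion r (starG l)) ∧
    copyCount (completeHG r s) H1 =
      ∑ i ∈ Finset.range (r - 1), Nat.choose l (s - r + 2 + i) * Nat.choose (n - l) (r - 2 - i) ∧
    (∑ i ∈ Finset.range (r - 1),
        Nat.choose l (s - r + 2 + i) * Nat.choose (n - l) (r - 2 - i)) ≤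
      exCount r n (completeHG r s) (expansion r (starG l)) := by
  have hmemH1 : ∀ e ∈ H1, 2 ≤ (e ∩ A).card := by
    intro e he
    rw [hH1, Finset.mem_filter] at he
    exact he.2
  have notc : ¬ Contains H1 (expansion r (starG l)) := H1_SlrFree r l hl A hA H1 hmemH1
  -- the counting
  set T : Finset (Finset ℕ) := (Finset.powersetCard s (Finset.range n)).filter
    (fun S => (S ∩ B).card ≤ r - 2) with hT
  have hTmemcard : ∀ S ∈ T, S.card = s := by
    intro S hS
    rw [hT, Finset.mem_filter, Finset.mem_powersetCard] at hS
    exact hS.1.2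
  have hinjT : Set.InjOn (fun S : Finset ℕ => Finset.powersetCard r S) (T : Set (Finset ℕ)) := by
    intro S hS S' hS' h
    rw [Finset.mem_coe] at hS hS'
    have h1 : hsupp (Finset.powersetCard r S) = S :=
      hsupp_powersetCard' r S (by omega) (by rw [hTmemcard S hS]; omega)
    have h2 : hsupp (Finset.powersetCard r S') = S' :=
      hsupp_powersetCard' r S' (by omega) (by rw [hTmemcard S' hS']; omega)
    rw [← h1, ← h2]
    dsimp only at h
    rw [h]
  have hcopy : copyCount (completeHG r s) H1 = T.card := by
    rw [copyCount, copies_complete r s n hr hrs A B hAB hU H1 hH1,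
      Set.ncard_coe_finset, Finset.card_image_of_injOn hinjT]
  have hTcard : T.card = ∑ i ∈ Finset.range (r - 1),
      Nat.choose l (s - r + 2 + i) * Nat.choose (n - l) (r - 2 - i) := by
    have hfib : T.card = ∑ j ∈ Finset.range (r - 1),
        ((Finset.powersetCard s (Finset.range n)).filter
          (fun S => (S ∩ B).card = j)).card := by
      rw [Finset.card_eq_sum_card_fiberwise
        (f := fun S => (S ∩ B).card) (t := Finset.range (r - 1))
        (fun S hS => by
          rw [hT, Finset.mem_coe, Finset.mem_filter] at hS
          obtain ⟨-, h2⟩ := hS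
          rw [Finset.mem_coe, Finset.mem_range]
          dsimp only at h2 ⊢
          omega)]
      apply Finset.sum_congr rfl
      intro j hj
      rw [Finset.mem_range] at hj
      congr 1
      rw [hT, Finset.filter_filter]
      apply Finset.filter_congr
      intro S _
      constructor
      · rintro ⟨-, h⟩; exact h
      · intro h; exact ⟨by omega, h⟩
    rw [hfib]
    have hstep : ∀ j ∈ Finset.range (r - 1),
        ((Finset.powersetCard s (Finset.range n)).filter
          (fun S => (S ∩ B).card = j)).card
        = Nat.choose l (s - j) * Nat.choose (n - l) j := by
      intro j hj
      rw [Finset.mem_range] at hj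
      rw [count_fixed' s n j A B hAB hU (by omega), hA, hB]
    rw [Finset.sum_congr rfl hstep]
    rw [← Finset.sum_range_reflect
      (fun j => Nat.choose l (s - j) * Nat.choose (n - l) j) (r - 1)]
    apply Finset.sum_congr rfl
    intro i hi
    rw [Finset.mem_range] at hi
    have e1 : s - (r - 1 - 1 - i) = s - r + 2 + i := by omega
    have e2 : r - 1 - 1 - i = r - 2 - i := by omega
    rw [e1, e2]
  have hcount : copyCount (completeHG r s) H1 = ∑ i ∈ Finset.range (r - 1),
      Nat.choose l (s - r + 2 + i) * Nat.choose (n - l) (r - 2 - i) := by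
    rw [hcopy, hTcard]
  refine ⟨notc, hcount, ?_⟩
  -- the supremum bound
  have hbdd : BddAbove { m | ∃ G : HG, Uniform r G ∧ hsupp G ⊆ Finset.range n ∧
      ¬ Contains G (expansion r (starG l)) ∧ m = copyCount (completeHG r s) G } := by
    refine ⟨2 ^ (Finset.powersetCard r (Finset.range n)).card, ?_⟩
    rintro m ⟨G, hGu, hGs, -, rfl⟩
    have hGsub : G ⊆ Finset.powersetCard r (Finset.range n) := by
      intro e he
      exact Finset.mem_powersetCard.mpr
        ⟨(Finset.le_sup (f := id) he).trans hGs, hGu e he⟩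
    calc copyCount (completeHG r s) G ≤ G.powerset.card := by
          rw [copyCount, ← Set.ncard_coe_finset]
          apply Set.ncard_le_ncard ?_ (Finset.finite_toSet _)
          intro K hK
          exact Finset.mem_coe.mpr (Finset.mem_powerset.mpr hK.1)
      _ = 2 ^ G.card := Finset.card_powerset G
      _ ≤ 2 ^ (Finset.powersetCard r (Finset.range n)).card :=
          Nat.pow_le_pow_right (by norm_num) (Finset.card_le_card hGsub)
  have hH1unif : Uniform r H1 := by
    intro e he
    rw [hH1, Finset.mem_filter, Finset.mem_powersetCard] at he
    exact he.1.2
  have hH1supp : hsupp H1 ⊆ Finset.range n := by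
    intro x hx
    unfold hsupp at hx
    rw [Finset.mem_sup] at hx
    obtain ⟨e, he, hxe⟩ := hx
    rw [hH1, Finset.mem_filter, Finset.mem_powersetCard] at he
    exact he.1.1 hxe
  exact le_csSup hbdd ⟨H1, hH1unif, hH1supp, notc, hcount.symm⟩
end

section
/- Let r ≥ 3, k ≥ 1, p ≥ 0, ℓ_1, …, ℓ_k ≥ 5, and t_1, …, t_p ≥ 2 (when p ≥ 1) be integers, set t = Σ_{i=1}^{k} ⌊(ℓ_i+1)/2⌋ + p − 1, and let n ≥ t. For each i ∈ {1,…,k} let Q_i be either P^r_{ℓ_i} or C^r_{ℓ_i}. Then the r-graph S_{n,t}^r contains no subhypergraph isomorphic to Q_1 ∪ ⋯ ∪ Q_k ∪ S^r_{t_1} ∪ ⋯ ∪ S^r_{t_p}. -/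
open Finset

/-- `C` is a vertex cover (transversal) of `H`. -/
def Covers (C : Finset ℕ) (H : HG) : Prop := ∀ e ∈ H, ∃ v ∈ e, v ∈ C

lemma mem_hsupp_of {G : HG} {e : Finset ℕ} {v : ℕ} (he : e ∈ G) (hv : v ∈ e) :
    v ∈ hsupp G := Finset.mem_sup.mpr ⟨e, he, hv⟩

lemma hsupp_emap_subset (f : ℕ → ℕ) (G : HG) :
    hsupp (emap f G) ⊆ (hsupp G).image f := by
  intro w hw
  obtain ⟨e', he', hwe'⟩ := Finset.mem_sup.mp hw
  obtain ⟨e, he, rfl⟩ := Finset.mem_image.mp he'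
  obtain ⟨v, hv, rfl⟩ := Finset.mem_image.mp hwe'
  exact Finset.mem_image.mpr ⟨v, mem_hsupp_of he hv, rfl⟩

lemma coverMin_union {G₁ G₂ : HG} {m₁ m₂ : ℕ}
    (hd : Disjoint (hsupp G₁) (hsupp G₂))
    (h₁ : ∀ C, Covers C G₁ → m₁ ≤ C.card)
    (h₂ : ∀ C, Covers C G₂ → m₂ ≤ C.card) :
    ∀ C, Covers C (G₁ ∪ G₂) → m₁ + m₂ ≤ C.card := by
  intro C hC
  have hc1 : m₁ ≤ (C ∩ hsupp G₁).card := h₁ _ (fun e he => by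
    obtain ⟨v, hv, hvC⟩ := hC e (Finset.mem_union_left _ he)
    exact ⟨v, hv, Finset.mem_inter.mpr ⟨hvC, mem_hsupp_of he hv⟩⟩)
  have hc2 : m₂ ≤ (C ∩ hsupp G₂).card := h₂ _ (fun e he => by
    obtain ⟨v, hv, hvC⟩ := hC e (Finset.mem_union_right _ he)
    exact ⟨v, hv, Finset.mem_inter.mpr ⟨hvC, mem_hsupp_of he hv⟩⟩)
  have hdisj : Disjoint (C ∩ hsupp G₁) (C ∩ hsupp G₂) :=
    hd.mono Finset.inter_subset_right Finset.inter_subset_right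
  calc m₁ + m₂ ≤ (C ∩ hsupp G₁).card + (C ∩ hsupp G₂).card := add_le_add hc1 hc2
    _ = ((C ∩ hsupp G₁) ∪ (C ∩ hsupp G₂)).card := (Finset.card_union_of_disjoint hdisj).symm
    _ ≤ C.card := Finset.card_le_card
        (Finset.union_subset Finset.inter_subset_left Finset.inter_subset_left)

lemma coverMin_emap {G : HG} {m : ℕ} (f : ℕ → ℕ) (hf : Function.Injective f)
    (h : ∀ C, Covers C G → m ≤ C.card) :
    ∀ C, Covers C (emap f G) → m ≤ C.card := by
  classical
  intro C hC
  set C' : Finset ℕ := (hsupp G).filter (fun v => f v ∈ C) with hC'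
  have hcov : Covers C' G := by
    intro e he
    obtain ⟨w, hw, hwC⟩ := hC (e.image f) (Finset.mem_image_of_mem _ he)
    obtain ⟨v, hv, rfl⟩ := Finset.mem_image.mp hw
    exact ⟨v, hv, Finset.mem_filter.mpr ⟨mem_hsupp_of he hv, hwC⟩⟩
  have h1 := h C' hcov
  have himg : C'.image f ⊆ C := by
    intro w hw
    obtain ⟨v, hv, rfl⟩ := Finset.mem_image.mp hw
    exact (Finset.mem_filter.mp hv).2
  have h2 : (C'.image f).card = C'.card := Finset.card_image_of_injective _ hf
  have h3 := Finset.card_le_card himg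
  omega

lemma coverMin_hIUnion (k : ℕ) (H : ℕ → HG) (m : ℕ → ℕ)
    (h : ∀ i < k, ∀ C, Covers C (H i) → m i ≤ C.card) :
    ∀ C, Covers C (hIUnion k H) → (∑ i ∈ Finset.range k, m i) ≤ C.card := by
  induction k with
  | zero => intro C _; simp
  | succ k ih =>
    intro C hC
    have hsplit : hIUnion (k+1) H
        = emap (fun v => Nat.pair k v) (H k) ∪ hIUnion k H := by
      unfold hIUnion
      rw [Finset.range_add_one, Finset.biUnion_insert]
    rw [hsplit] at hC
    have hd : Disjoint (hsupp (emap (fun v => Nat.pair k v) (H k)))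
        (hsupp (hIUnion k H)) := by
      rw [Finset.disjoint_left]
      intro w h1 h2
      obtain ⟨v, -, rfl⟩ := Finset.mem_image.mp (hsupp_emap_subset _ _ h1)
      obtain ⟨e', he', hwe'⟩ := Finset.mem_sup.mp h2
      obtain ⟨i, hi, he''⟩ := Finset.mem_biUnion.mp he'
      obtain ⟨u, -, huv⟩ := Finset.mem_image.mp
        ((hsupp_emap_subset _ _) (mem_hsupp_of he'' hwe'))
      have hik := (Nat.pair_eq_pair.mp huv).1
      simp only [Finset.mem_range] at hi
      omega
    have hpinj : Function.Injective (fun v => Nat.pair k v) :=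
      fun a b hab => (Nat.pair_eq_pair.mp hab).2
    have := coverMin_union hd (coverMin_emap _ hpinj (h k (Nat.lt_succ_self k)))
      (ih (fun i hi => h i (hi.trans (Nat.lt_succ_self k)))) C hC
    rw [Finset.sum_range_succ]
    omega
lemma pair_inj' {a b c d : ℕ} (h : Nat.pair a b = Nat.pair c d) : a = c ∧ b = d :=
  Nat.pair_eq_pair.mp h

lemma coverMin_expansion (r ln : ℕ) (edge : ℕ → Finset ℕ)
    (hmem : ∀ i < ln, i ∈ edge i)
    (hecard : ∀ i < ln, (edge i).card ≤ 2)
    (hdeg : ∀ v, ((Finset.range ln).filter (fun i => v ∈ edge i)).card ≤ 2) :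
    ∀ C, Covers C (expansion r ((Finset.range ln).image edge)) → (ln+1)/2 ≤ C.card := by
  classical
  intro C hC
  set ex : Finset ℕ → Finset ℕ := fun e => e.image (fun v => Nat.pair 0 v) ∪
    (Finset.range (r-2)).image (fun j => Nat.pair 1 (Nat.pair (Encodable.encode e) j)) with hex
  have hCspec : ∀ i < ln, ∃ w, w ∈ ex (edge i) ∧ w ∈ C := by
    intro i hi
    obtain ⟨v, hv, hvC⟩ := hC (ex (edge i))
      (Finset.mem_image_of_mem _ (Finset.mem_image_of_mem _ (Finset.mem_range.mpr hi)))
    exact ⟨v, hv, hvC⟩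
  set χ : ℕ → ℕ := fun i =>
    if h : ∃ w, w ∈ ex (edge i) ∧ w ∈ C then h.choose else 0 with hχ
  have hχspec : ∀ i < ln, χ i ∈ ex (edge i) ∧ χ i ∈ C := by
    intro i hi
    have h := hCspec i hi
    simp only [hχ, dif_pos h]
    exact h.choose_spec
  have hfib : ∀ w ∈ (Finset.range ln).image χ,
      ((Finset.range ln).filter (fun i => χ i = w)).card ≤ 2 := by
    intro w hw
    obtain ⟨i₀, hi₀r, rfl⟩ := Finset.mem_image.mp hw
    have hi₀ := Finset.mem_range.mp hi₀r
    have h₀ := (hχspec i₀ hi₀).1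
    rcases Finset.mem_union.mp h₀ with h | h
    · -- χ i₀ = pair 0 v
      obtain ⟨v, hv, hveq⟩ := Finset.mem_image.mp h
      refine le_trans (Finset.card_le_card ?_) (hdeg v)
      intro i hi
      obtain ⟨hir, hieq⟩ := Finset.mem_filter.mp hi
      have hil := Finset.mem_range.mp hir
      have h₁ := (hχspec i hil).1
      rw [hieq] at h₁
      rcases Finset.mem_union.mp h₁ with h2 | h2
      · obtain ⟨v', hv', hveq'⟩ := Finset.mem_image.mp h2
        have : v' = v := (pair_inj' (hveq'.trans hveq.symm)).2
        exact Finset.mem_filter.mpr ⟨hir, this ▸ hv'⟩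
      · obtain ⟨j, hj, hjeq⟩ := Finset.mem_image.mp h2
        exact absurd (pair_inj' (hjeq.trans hveq.symm)).1 (by omega)
    · -- χ i₀ = pair 1 (pair (encode (edge i₀)) j₀)
      obtain ⟨j₀, hj₀, hjeq₀⟩ := Finset.mem_image.mp h
      have hsub : (Finset.range ln).filter (fun i => χ i = χ i₀) ⊆ edge i₀ := by
        intro i hi
        obtain ⟨hir, hieq⟩ := Finset.mem_filter.mp hi
        have hil := Finset.mem_range.mp hir
        have h₁ := (hχspec i hil).1
        rw [hieq] at h₁
        rcases Finset.mem_union.mp h₁ with h2 | h2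
        · obtain ⟨v', hv', hveq'⟩ := Finset.mem_image.mp h2
          exact absurd (pair_inj' (hveq'.trans hjeq₀.symm)).1 (by omega)
        · obtain ⟨j, hj, hjeq⟩ := Finset.mem_image.mp h2
          have henc := (pair_inj' (pair_inj' (hjeq.trans hjeq₀.symm)).2).1
          have : edge i = edge i₀ := Encodable.encode_injective henc
          exact this ▸ hmem i hil
      exact le_trans (Finset.card_le_card hsub) (hecard i₀ hi₀)
  have hl2 : ln ≤ 2 * ((Finset.range ln).image χ).card := by
    have := Finset.card_le_mul_card_image (Finset.range ln) 2 hfib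
    simpa using this
  have himg : (Finset.range ln).image χ ⊆ C := by
    intro w hw
    obtain ⟨i, hi, rfl⟩ := Finset.mem_image.mp hw
    exact (hχspec i (Finset.mem_range.mp hi)).2
  have := Finset.card_le_card himg
  omega
lemma coverMin_pathExpansion (r ln : ℕ) :
    ∀ C, Covers C (expansion r (pathG ln)) → (ln+1)/2 ≤ C.card := by
  have h := coverMin_expansion r ln (fun i => ({i, i+1} : Finset ℕ))
    (fun i _ => Finset.mem_insert_self _ _)
    (fun i _ => (Finset.card_insert_le _ _).trans (by simp))
    (fun v => by
      refine le_trans (Finset.card_le_card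
        (?_ : _ ⊆ ({v-1, v} : Finset ℕ))) ((Finset.card_insert_le _ _).trans (by simp))
      intro i hi
      obtain ⟨hir, hmemv⟩ := Finset.mem_filter.mp hi
      simp only [Finset.mem_insert, Finset.mem_singleton] at hmemv ⊢
      omega)
  intro C hC
  exact h C (by rw [pathG] at hC; exact hC)

lemma coverMin_cycleExpansion (r ln : ℕ) :
    ∀ C, Covers C (expansion r (cycleG ln)) → (ln+1)/2 ≤ C.card := by
  have h := coverMin_expansion r ln (fun i => ({i, (i+1) % ln} : Finset ℕ))
    (fun i _ => Finset.mem_insert_self _ _)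
    (fun i _ => (Finset.card_insert_le _ _).trans (by simp))
    (fun v => by
      refine le_trans (Finset.card_le_card
        (?_ : _ ⊆ ({(v + ln - 1) % ln, v} : Finset ℕ)))
        ((Finset.card_insert_le _ _).trans (by simp))
      intro i hi
      obtain ⟨hir, hmemv⟩ := Finset.mem_filter.mp hi
      have hil := Finset.mem_range.mp hir
      simp only [Finset.mem_insert, Finset.mem_singleton] at hmemv ⊢
      rcases hmemv with h | h
      · right; omega
      · left
        rcases Nat.lt_or_ge (i+1) ln with h2 | h2
        · rw [Nat.mod_eq_of_lt h2] at h
          have e1 : v + ln - 1 = i + ln := by omega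
          rw [e1, Nat.add_mod_right, Nat.mod_eq_of_lt hil]
        · have h3 : i + 1 = ln := by omega
          rw [← h3, Nat.mod_self] at h
          have e1 : v + ln - 1 = i := by omega
          rw [e1, Nat.mod_eq_of_lt hil])
  intro C hC
  exact h C (by rw [cycleG] at hC; exact hC)

lemma coverMin_starExpansion (r tj : ℕ) (htj : 1 ≤ tj) :
    ∀ C, Covers C (expansion r (starG tj)) → 1 ≤ C.card := by
  intro C hC
  have hne : ({0, 1} : Finset ℕ) ∈ starG tj := by
    rw [starG]
    exact Finset.mem_image.mpr ⟨0, Finset.mem_range.mpr htj, rfl⟩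
  obtain ⟨v, -, hvC⟩ := hC _ (Finset.mem_image_of_mem _ hne)
  exact Finset.card_pos.mpr ⟨v, hvC⟩

/-- For `t = Σ ⌊(l i + 1)/2⌋ + p - 1` and `n ≥ t`, the `r`-graph
`S_{n,t}^r` contains no copy of `Q_1 ∪ ⋯ ∪ Q_k ∪ S^r_{t_1} ∪ ⋯ ∪ S^r_{t_p}`,
where each `Q i` is a path or cycle expansion. -/
theorem stmt19 (r k p n : ℕ) (l tf : ℕ → ℕ) (t : ℕ) (Q : ℕ → HG)
    (hr : 3 ≤ r) (hk : 1 ≤ k)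
    (hl : ∀ i < k, 5 ≤ l i) (htf : ∀ j < p, 2 ≤ tf j)
    (hQ : ∀ i < k, Q i = expansion r (pathG (l i)) ∨ Q i = expansion r (cycleG (l i)))
    (ht : t = (∑ i ∈ Finset.range k, (l i + 1) / 2) + p - 1) (hn : t ≤ n) :
    ¬ Contains (starHG r n t)
        (hUnion (hIUnion k Q) (hIUnion p (fun j => expansion r (starG (tf j))))) := by
  rintro ⟨K, hKsub, f, hinj, hmap⟩
  classical
  set Hbig := hUnion (hIUnion k Q) (hIUnion p fun j => expansion r (starG (tf j)))
    with hHbig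
  set C := (hsupp Hbig).filter (fun v => f v < t) with hCdef
  have hcov : Covers C Hbig := by
    intro e he
    have hK : e.image f ∈ K := by
      rw [← hmap, emap]
      exact Finset.mem_image_of_mem _ he
    have hstar := hKsub hK
    rw [starHG, Finset.mem_filter] at hstar
    obtain ⟨-, w, hw, hwt⟩ := hstar
    obtain ⟨v, hv, rfl⟩ := Finset.mem_image.mp hw
    exact ⟨v, hv, Finset.mem_filter.mpr ⟨mem_hsupp_of he hv, hwt⟩⟩
  have hcardC : C.card ≤ t := by
    have hCsub : (C : Set ℕ) ⊆ ↑(hsupp Hbig) :=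
      Finset.coe_subset.mpr (Finset.filter_subset _ _)
    have h1 : (C.image f).card = C.card :=
      Finset.card_image_of_injOn (hinj.mono hCsub)
    have h2 : C.image f ⊆ Finset.range t := by
      intro w hw
      obtain ⟨v, hv, rfl⟩ := Finset.mem_image.mp hw
      exact Finset.mem_range.mpr (Finset.mem_filter.mp hv).2
    have := Finset.card_le_card h2
    simp only [Finset.card_range] at this
    omega
  have hA : ∀ C', Covers C' (hIUnion k Q) →
      (∑ i ∈ Finset.range k, (l i + 1)/2) ≤ C'.card := by
    apply coverMin_hIUnion
    intro i hi C' hc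
    rcases hQ i hi with h | h
    · rw [h] at hc; exact coverMin_pathExpansion r (l i) C' hc
    · rw [h] at hc; exact coverMin_cycleExpansion r (l i) C' hc
  have hB : ∀ C', Covers C' (hIUnion p fun j => expansion r (starG (tf j))) →
      p ≤ C'.card := by
    have := coverMin_hIUnion p (fun j => expansion r (starG (tf j))) (fun _ => 1)
      (fun j hj C' hc => coverMin_starExpansion r (tf j)
        (le_trans (by omega) (htf j hj)) C' hc)
    simpa using this
  have hdisj : Disjoint (hsupp (emap (fun v => 2*v) (hIUnion k Q)))
      (hsupp (emap (fun v => 2*v+1) (hIUnion p fun j => expansion r (starG (tf j))))) := by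
    rw [Finset.disjoint_left]
    intro w h1 h2
    obtain ⟨a, -, rfl⟩ := Finset.mem_image.mp (hsupp_emap_subset _ _ h1)
    obtain ⟨b, -, hb⟩ := Finset.mem_image.mp (hsupp_emap_subset _ _ h2)
    omega
  have hbig : ∀ C', Covers C' Hbig →
      (∑ i ∈ Finset.range k, (l i + 1)/2) + p ≤ C'.card := by
    rw [hHbig, hUnion]
    exact coverMin_union hdisj
      (coverMin_emap _ (fun a b hab => by omega) hA)
      (coverMin_emap _ (fun a b hab => by omega) hB)
  have hfin := hbig C hcov
  have hT2 : (l 0 + 1)/2 ≤ ∑ i ∈ Finset.range k, (l i + 1)/2 :=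
    Finset.single_le_sum (f := fun i => (l i + 1)/2) (fun _ _ => Nat.zero_le _)
      (Finset.mem_range.mpr hk)
  have hT : 3 ≤ (l 0 + 1)/2 := by have := hl 0 hk; omega
  omega
end
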